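/- arXiv:2601.01623 — 3 statements merged into one kernel-verified Lean document; each statement's English description precedes it below -/
import Mathlib

section
/- Let (a_j)_{j≥1} be a non-increasing sequence of nonnegative reals with a_j ≤ C·j^{-β-1} for some constants C > 0 and β > 0. Then for any σ with 1 < 2σ < 1+β, there exist constants C' > 0 and β̃ := β + 1 - 2σ > 0 such that for all integers 2 ≤ m₁ < m₂, ∑_{j=m₁}^{m₂} (a_j - a_{j+4})·j^{2σ} ≤ C'·m₁^{-β̃}. -/
/-- Summation-by-parts estimate (Colding–Minicozzi Lemma 2.73 version):
a non-increasing nonnegative sequence with `a_j ≤ C j^{-β-1}` satisfies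
`∑_{j=m₁}^{m₂} (a_j - a_{j+4}) j^{2σ} ≤ C' m₁^{-(β+1-2σ)}` for `1 < 2σ < 1+β`. -/
theorem stmt_1 (C β : ℝ) (a : ℕ → ℝ) (hC : 0 < C) (hβ : 0 < β)
    (h_nonneg : ∀ j, 0 ≤ a j) (h_mono : ∀ j, a (j+1) ≤ a j)
    (h_decay : ∀ j : ℕ, 1 ≤ j → a j ≤ C * (j:ℝ) ^ (-β - 1)) :
    ∀ σ : ℝ, 1 < 2*σ → 2*σ < 1 + β →
    ∃ C' > 0, ∀ m₁ m₂ : ℕ, 2 ≤ m₁ → m₁ < m₂ →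
      ∑ j ∈ Finset.Icc m₁ m₂, (a j - a (j+4)) * (j:ℝ) ^ (2*σ)
        ≤ C' * (m₁:ℝ) ^ (-(β + 1 - 2*σ)) := by
  intro σ hσ1 hσ2
  have ha : Antitone a := antitone_nat_of_succ_le h_mono
  have hbt : 0 < β + 1 - 2*σ := by linarith
  set bt : ℝ := β + 1 - 2*σ with hbtdef
  set r : ℝ := (2:ℝ) ^ (-bt) with hrdef
  have hr0 : 0 < r := Real.rpow_pos_of_pos (by norm_num) _
  have hr1 : r < 1 := Real.rpow_lt_one_of_one_lt_of_neg (by norm_num) (by linarith)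
  set A : ℝ := 4 * C * (2:ℝ) ^ (2*σ) with hAdef
  have hA : 0 < A := by
    have := Real.rpow_pos_of_pos (show (0:ℝ) < 2 by norm_num) (2*σ)
    positivity
  set K : ℝ := A / (1 - r) with hKdef
  have hK : 0 < K := div_pos hA (by linarith)
  have hKr : A = K * (1 - r) := by
    rw [hKdef, div_mul_cancel₀ _ (ne_of_gt (by linarith : (0:ℝ) < 1 - r))]
  have hAK : A ≤ K := by
    nlinarith [hr0, hA]
  -- telescoping identity
  have tele2 : ∀ m M : ℕ, m ≤ M →
      ∑ j ∈ Finset.Ico m M, (a j - a (j+4))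
        + (a M + a (M+1) + a (M+2) + a (M+3))
      = a m + a (m+1) + a (m+2) + a (m+3) := by
    intro m M hM
    induction M, hM using Nat.le_induction with
    | base => simp
    | succ M hM ih =>
      rw [Finset.sum_Ico_succ_top hM]
      have e2 : M + 1 + 1 = M + 2 := by omega
      have e3 : M + 1 + 2 = M + 3 := by omega
      have e4 : M + 1 + 3 = M + 4 := by omega
      rw [e2, e3, e4]
      linarith [ih]
  have teleLe : ∀ m M : ℕ, ∑ j ∈ Finset.Ico m M, (a j - a (j+4)) ≤ 4 * a m := by
    intro m M
    rcases le_or_gt m M with h | h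
    · have := tele2 m M h
      have h1 : a (m+1) ≤ a m := ha (by omega)
      have h2 : a (m+2) ≤ a m := ha (by omega)
      have h3 : a (m+3) ≤ a m := ha (by omega)
      have n0 := h_nonneg M
      have n1 := h_nonneg (M+1)
      have n2 := h_nonneg (M+2)
      have n3 := h_nonneg (M+3)
      linarith
    · rw [Finset.Ico_eq_empty (by omega)]
      simp
      linarith [h_nonneg m]
  -- single block bound
  have block : ∀ m M : ℕ, 1 ≤ m → M ≤ 2*m →
      ∑ j ∈ Finset.Ico m M, (a j - a (j+4)) * (j:ℝ) ^ (2*σ)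
        ≤ A * (m:ℝ) ^ (-bt) := by
    intro m M hm hM
    have hmR : (0:ℝ) < (m:ℝ) := by exact_mod_cast hm
    have step1 : ∑ j ∈ Finset.Ico m M, (a j - a (j+4)) * (j:ℝ) ^ (2*σ)
        ≤ ∑ j ∈ Finset.Ico m M, (a j - a (j+4)) * ((2*m : ℕ):ℝ) ^ (2*σ) := by
      apply Finset.sum_le_sum
      intro j hj
      have hj2 : j ≤ 2*m := by
        have := (Finset.mem_Ico.mp hj).2; omega
      have hfac : 0 ≤ a j - a (j+4) := sub_nonneg.mpr (ha (by omega))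
      apply mul_le_mul_of_nonneg_left _ hfac
      exact Real.rpow_le_rpow (by positivity) (by exact_mod_cast hj2) (by linarith)
    have step2 : ∑ j ∈ Finset.Ico m M, (a j - a (j+4)) * ((2*m : ℕ):ℝ) ^ (2*σ)
        = (∑ j ∈ Finset.Ico m M, (a j - a (j+4))) * ((2*m : ℕ):ℝ) ^ (2*σ) := by
      rw [Finset.sum_mul]
    have hpow : (0:ℝ) ≤ ((2*m : ℕ):ℝ) ^ (2*σ) := Real.rpow_nonneg (by positivity) _
    have step3 : (∑ j ∈ Finset.Ico m M, (a j - a (j+4))) * ((2*m : ℕ):ℝ) ^ (2*σ)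
        ≤ (4 * a m) * ((2*m : ℕ):ℝ) ^ (2*σ) :=
      mul_le_mul_of_nonneg_right (teleLe m M) hpow
    have ham : a m ≤ C * (m:ℝ) ^ (-β - 1) := h_decay m hm
    have hcast : ((2*m : ℕ):ℝ) = 2 * (m:ℝ) := by push_cast; ring
    have step4 : (4 * a m) * ((2*m : ℕ):ℝ) ^ (2*σ) ≤ A * (m:ℝ) ^ (-bt) := by
      rw [hcast, Real.mul_rpow (by norm_num) (le_of_lt hmR)]
      have h1 : (4 * a m) * ((2:ℝ)^(2*σ) * (m:ℝ)^(2*σ))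
          ≤ (4 * (C * (m:ℝ) ^ (-β - 1))) * ((2:ℝ)^(2*σ) * (m:ℝ)^(2*σ)) := by
        apply mul_le_mul_of_nonneg_right (by linarith)
        have := Real.rpow_nonneg (le_of_lt hmR) (2*σ)
        have := Real.rpow_nonneg (show (0:ℝ) ≤ 2 by norm_num) (2*σ)
        positivity
      have h2 : (4 * (C * (m:ℝ) ^ (-β - 1))) * ((2:ℝ)^(2*σ) * (m:ℝ)^(2*σ))
          = A * (m:ℝ) ^ (-bt) := by
        rw [hAdef, hbtdef]
        rw [show (m:ℝ) ^ (-(β + 1 - 2*σ)) = (m:ℝ) ^ (-β - 1 + 2*σ) by ring_nf]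
        rw [Real.rpow_add hmR]
        ring
      linarith
    linarith
  -- main induction
  have key : ∀ n : ℕ, ∀ m m₂ : ℕ, 2 ≤ m → m₂ ≤ m + n →
      ∑ j ∈ Finset.Icc m m₂, (a j - a (j+4)) * (j:ℝ) ^ (2*σ)
        ≤ K * (m:ℝ) ^ (-bt) := by
    intro n
    induction n using Nat.strong_induction_on with
    | _ n ih =>
      intro m m₂ hm hmn
      have hX : (0:ℝ) ≤ (m:ℝ) ^ (-bt) :=
        Real.rpow_nonneg (by positivity) _
      rw [← Finset.Ico_add_one_right_eq_Icc]
      by_cases hcase : m₂ + 1 ≤ 2*m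
      · calc ∑ j ∈ Finset.Ico m (m₂+1), (a j - a (j+4)) * (j:ℝ) ^ (2*σ)
            ≤ A * (m:ℝ) ^ (-bt) := block m (m₂+1) (by omega) hcase
          _ ≤ K * (m:ℝ) ^ (-bt) := mul_le_mul_of_nonneg_right hAK hX
      · push_neg at hcase
        have h2m : 2*m ≤ m₂ := by omega
        have hn2 : 2 ≤ n := by omega
        rw [← Finset.sum_Ico_consecutive _ (show m ≤ 2*m by omega)
              (show 2*m ≤ m₂ + 1 by omega)]
        have hb1 : ∑ j ∈ Finset.Ico m (2*m), (a j - a (j+4)) * (j:ℝ) ^ (2*σ)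
            ≤ A * (m:ℝ) ^ (-bt) := block m (2*m) (by omega) le_rfl
        have hb2 : ∑ j ∈ Finset.Ico (2*m) (m₂+1), (a j - a (j+4)) * (j:ℝ) ^ (2*σ)
            ≤ K * ((2*m : ℕ):ℝ) ^ (-bt) := by
          rw [Finset.Ico_add_one_right_eq_Icc]
          exact ih (n-2) (by omega) (2*m) m₂ (by omega) (by omega)
        have hcast : ((2*m : ℕ):ℝ) = 2 * (m:ℝ) := by push_cast; ring
        have hrw : K * ((2*m : ℕ):ℝ) ^ (-bt) = K * r * (m:ℝ) ^ (-bt) := by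
          rw [hcast, Real.mul_rpow (by norm_num) (by positivity), hrdef]
          ring
        have hsum : A * (m:ℝ) ^ (-bt) + K * r * (m:ℝ) ^ (-bt)
            = K * (m:ℝ) ^ (-bt) := by
          rw [hKr]; ring
        rw [hrw] at hb2
        linarith
  refine ⟨K, hK, ?_⟩
  intro m₁ m₂ hm₁ hm₁₂
  exact key m₂ m₁ m₂ hm₁ (by omega)
end

section
/- Let f ∈ H¹(ℝ) vanish a.e. outside (0,L). For δ ∈ (0,L/4) let η_δ : ℝ → [0,1] be Lipschitz with η_δ ≡ 1 on [δ, L-δ], η_δ ≡ 0 outside (δ/2, L-δ/2), and |η_δ'| ≤ C/δ. Then ‖η_δ f - f‖_{H¹(ℝ)} → 0 as δ → 0. -/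
open MeasureTheory Filter Set
open scoped ENNReal NNReal

lemma ae_hasDerivAt_primitive {g : ℝ → ℝ} (hg : LocallyIntegrable g volume)
    (hgi : ∀ a b : ℝ, IntervalIntegrable g volume a b) :
    ∀ᵐ x, HasDerivAt (fun y => ∫ t in (0:ℝ)..y, g t) (g x) x := by
  filter_upwards [(IsUnifLocDoublingMeasure.vitaliFamily (volume : Measure ℝ)
      1).ae_tendsto_average_norm_sub hg] with x hx
  set F : ℝ → ℝ := fun y => ∫ t in (0:ℝ)..y, g t with hF
  have bnd : ∀ a b : ℝ, a < b →
      |(∫ t in a..b, g t) - (b - a) * g x| ≤ ∫ t in Icc a b, |g t - g x| := by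
    intro a b hab
    have e1 : (∫ t in a..b, g t) - (b - a) * g x = ∫ t in a..b, (g t - g x) := by
      rw [intervalIntegral.integral_sub (hgi a b) intervalIntegrable_const,
        intervalIntegral.integral_const, smul_eq_mul]
    rw [e1]
    calc |∫ t in a..b, (g t - g x)| ≤ ∫ t in a..b, |g t - g x| :=
          intervalIntegral.abs_integral_le_integral_abs hab.le
      _ = ∫ t in Ioc a b, |g t - g x| := by
          rw [intervalIntegral.integral_of_le hab.le]
      _ = ∫ t in Icc a b, |g t - g x| := (integral_Icc_eq_integral_Ioc).symm
  have hFsub : ∀ a b : ℝ, F b - F a = ∫ t in a..b, g t := by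
    intro a b
    rw [hF]
    exact (intervalIntegral.integral_interval_sub_left (hgi 0 b) (hgi 0 a))
  rw [hasDerivAt_iff_tendsto_slope]
  rw [← nhdsLT_sup_nhdsGT x, tendsto_sup]
  constructor
  · -- left limit
    have hL := hx.comp (Real.tendsto_Icc_vitaliFamily_left x)
    rw [tendsto_iff_norm_sub_tendsto_zero]
    apply squeeze_zero' (Eventually.of_forall fun _ => norm_nonneg _) _ hL
    filter_upwards [self_mem_nhdsWithin] with y (hy : y < x)
    have vol : (volume (Icc y x)).toReal = x - y := by
      rw [Real.volume_Icc, ENNReal.toReal_ofReal (by linarith)]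
    have hb := bnd y x hy
    rw [Function.comp_apply, setAverage_eq, measureReal_def, vol, smul_eq_mul]
    rw [slope_def_field, div_sub' (by linarith : y - x ≠ 0)]
    simp only [Real.norm_eq_abs]
    rw [abs_div, abs_of_nonpos (by linarith : y - x ≤ 0)]
    rw [div_le_iff₀ (by linarith : (0:ℝ) < -(y - x))]
    have hFyx : F y - F x = -(∫ t in y..x, g t) := by
      rw [← intervalIntegral.integral_symm]; exact hFsub x y
    calc |F y - F x - (y - x) * g x| = |(∫ t in y..x, g t) - (x - y) * g x| := by
          rw [hFyx, ← abs_neg]; congr 1; ring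
      _ ≤ ∫ t in Icc y x, |g t - g x| := bnd y x hy
      _ = (x - y)⁻¹ * (∫ t in Icc y x, |g t - g x|) * -(y - x) := by
          rw [neg_sub, mul_comm, ← mul_assoc, mul_inv_cancel₀ (by linarith : x - y ≠ 0), one_mul]
  · -- right limit
    have hR := hx.comp (Real.tendsto_Icc_vitaliFamily_right x)
    rw [tendsto_iff_norm_sub_tendsto_zero]
    apply squeeze_zero' (Eventually.of_forall fun _ => norm_nonneg _) _ hR
    filter_upwards [self_mem_nhdsWithin] with y (hy : x < y)
    have vol : (volume (Icc x y)).toReal = y - x := by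
      rw [Real.volume_Icc, ENNReal.toReal_ofReal (by linarith)]
    rw [Function.comp_apply, setAverage_eq, measureReal_def, vol, smul_eq_mul]
    rw [slope_def_field, div_sub' (by linarith : y - x ≠ 0)]
    simp only [Real.norm_eq_abs]
    rw [abs_div, abs_of_pos (by linarith : (0:ℝ) < y - x)]
    rw [div_le_iff₀ (by linarith : (0:ℝ) < y - x)]
    calc |F y - F x - (y - x) * g x| = |(∫ t in x..y, g t) - (y - x) * g x| := by
          rw [hFsub]
      _ ≤ ∫ t in Icc x y, |g t - g x| := bnd x y hy
      _ = (y - x)⁻¹ * (∫ t in Icc x y, |g t - g x|) * (y - x) := by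
          rw [mul_comm ((y - x)⁻¹), mul_assoc, inv_mul_cancel₀ (by linarith : y - x ≠ 0), mul_one]

lemma sq_setIntegral_abs_le {g : ℝ → ℝ} (s : Set ℝ) (hfin : volume s ≠ ⊤)
    (hg2 : MemLp g 2 volume) :
    (∫ t in s, |g t|) ^ 2 ≤ (volume s).toReal * ∫ t in s, (g t) ^ 2 := by
  haveI : IsFiniteMeasure (volume.restrict s) :=
    ⟨by rwa [Measure.restrict_apply_univ, lt_top_iff_ne_top]⟩
  have hconj : (2:ℝ).HolderConjugate 2 := by constructor <;> norm_num
  have h1 : MemLp (fun _ : ℝ => (1:ℝ)) (ENNReal.ofReal 2) (volume.restrict s) :=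
    memLp_const 1
  have hg2' : MemLp g (ENNReal.ofReal 2) (volume.restrict s) := by
    rw [show ENNReal.ofReal 2 = 2 by norm_num]
    exact hg2.restrict s
  have H := integral_mul_norm_le_Lp_mul_Lq hconj h1 hg2'
  simp only [norm_one, one_mul, one_pow, Real.norm_eq_abs, integral_const, smul_eq_mul,
    mul_one, Real.rpow_two] at H
  have hA : (0:ℝ) ≤ (volume s).toReal := ENNReal.toReal_nonneg
  have hB : (0:ℝ) ≤ ∫ t in s, (g t) ^ 2 :=
    integral_nonneg fun t => sq_nonneg _
  have habs2 : ∀ t, |g t| ^ (2:ℝ) = (g t)^2 := by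
    intro t
    rw [show (2:ℝ) = ((2:ℕ):ℝ) by norm_num, Real.rpow_natCast, sq_abs]
  have h1pow : ∀ t:ℝ, (1:ℝ) ^ (2:ℝ) = (1:ℝ) := fun _ => Real.one_rpow 2
  have HH : (∫ t in s, |g t|) ≤
      ((volume s).toReal) ^ ((1:ℝ)/2) * (∫ t in s, (g t)^2) ^ ((1:ℝ)/2) := by
    calc (∫ t in s, |g t|) ≤ (∫ (_ : ℝ) in s, (1:ℝ) ^ (2:ℝ)) ^ ((1:ℝ)/2)
          * (∫ t in s, |g t| ^ (2:ℝ)) ^ ((1:ℝ)/2) := by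
          convert H using 4
          · simp [measureReal_def]
          · rfl
          · simp
      _ = ((volume s).toReal) ^ ((1:ℝ)/2) * (∫ t in s, (g t)^2) ^ ((1:ℝ)/2) := by
          congr 2
          · simp [Measure.restrict_apply_univ, measureReal_def]
          · exact integral_congr_ae (Eventually.of_forall fun t => habs2 t)
  have hnn : (0:ℝ) ≤ ∫ t in s, |g t| := integral_nonneg fun t => abs_nonneg _
  calc (∫ t in s, |g t|) ^ 2
      ≤ (((volume s).toReal) ^ ((1:ℝ)/2) * (∫ t in s, (g t)^2) ^ ((1:ℝ)/2)) ^ 2 :=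
        pow_le_pow_left₀ hnn HH 2
    _ = (volume s).toReal * ∫ t in s, (g t)^2 := by
        rw [mul_pow, ← Real.sqrt_eq_rpow, ← Real.sqrt_eq_rpow, Real.sq_sqrt hA, Real.sq_sqrt hB]

lemma poincare_strip {g g' : ℝ → ℝ} {a b : ℝ} (hab : a ≤ b)
    (hbound : ∀ t ∈ Icc a b, |g t| ≤ ∫ s in Icc a b, |g' s|)
    (hg2int : IntegrableOn (fun t => (g t) ^ 2) (Icc a b) volume)
    (hg'2 : MemLp g' 2 volume) :
    ∫ t in Icc a b, (g t) ^ 2 ≤ (b - a) ^ 2 * ∫ t in Icc a b, (g' t) ^ 2 := by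
  set M := ∫ s in Icc a b, |g' s| with hM
  have hMnn : 0 ≤ M := integral_nonneg fun t => abs_nonneg _
  have hvol : (volume (Icc a b)).toReal = b - a := by
    rw [Real.volume_Icc, ENNReal.toReal_ofReal (by linarith)]
  have step1 : ∫ t in Icc a b, (g t) ^ 2 ≤ ∫ _ in Icc a b, M ^ 2 := by
    refine setIntegral_mono_on hg2int (integrableOn_const ?_) measurableSet_Icc
      (fun t ht => ?_)
    · rw [Real.volume_Icc]; exact ENNReal.ofReal_ne_top
    · have h := hbound t ht
      nlinarith [abs_nonneg (g t), sq_abs (g t)]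
  have step2 : (∫ _ in Icc a b, M ^ 2) = (b - a) * M ^ 2 := by
    rw [setIntegral_const, smul_eq_mul, measureReal_def, hvol]
  have step3 : M ^ 2 ≤ (b - a) * ∫ t in Icc a b, (g' t) ^ 2 := by
    have := sq_setIntegral_abs_le (g := g') (Icc a b)
      (by rw [Real.volume_Icc]; exact ENNReal.ofReal_ne_top) hg'2
    rwa [hvol] at this
  have hInn : 0 ≤ ∫ t in Icc a b, (g' t) ^ 2 := integral_nonneg fun t => sq_nonneg _
  calc ∫ t in Icc a b, (g t) ^ 2 ≤ (b - a) * M ^ 2 := step1.trans_eq step2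
    _ ≤ (b - a) * ((b - a) * ∫ t in Icc a b, (g' t) ^ 2) := by
        apply mul_le_mul_of_nonneg_left step3 (by linarith)
    _ = (b - a) ^ 2 * ∫ t in Icc a b, (g' t) ^ 2 := by ring

set_option maxHeartbeats 2000000 in
/-- Cutoff approximation: if `f ∈ H¹(ℝ)` vanishes outside `(0,L)` and `η_δ` are
Lipschitz cutoffs with `η_δ ≡ 1` on `[δ, L-δ]`, `η_δ ≡ 0` outside `(δ/2, L-δ/2)`,
`0 ≤ η_δ ≤ 1` and `|η_δ'| ≤ C/δ`, then `‖η_δ f - f‖_{H¹(ℝ)} → 0` as `δ → 0`. -/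
theorem stmt_12 (L Cc : ℝ) (hL : 0 < L) (hCc : 0 < Cc) (f f' : ℝ → ℝ)
    (hcont : Continuous f)
    (hf'int : ∀ a b : ℝ, IntervalIntegrable f' volume a b)
    (hf'L2 : MemLp f' 2 volume)
    (hFTC : ∀ a b : ℝ, f b - f a = ∫ t in a..b, f' t)
    (hvanish : ∀ t, t ∉ Set.Ioo 0 L → f t = 0)
    (η : ℝ → ℝ → ℝ)
    (hη01 : ∀ δ ∈ Set.Ioo 0 (L/4), ∀ t, η δ t ∈ Set.Icc (0:ℝ) 1)
    (hη1 : ∀ δ ∈ Set.Ioo 0 (L/4), ∀ t ∈ Set.Icc δ (L - δ), η δ t = 1)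
    (hη0 : ∀ δ ∈ Set.Ioo 0 (L/4), ∀ t, t ∉ Set.Ioo (δ/2) (L - δ/2) → η δ t = 0)
    (hηlip : ∀ δ ∈ Set.Ioo 0 (L/4), LipschitzWith (Real.toNNReal (Cc/δ)) (η δ)) :
    Tendsto (fun δ =>
        (∫ t, (η δ t * f t - f t)^2) +
        ∫ t, (deriv (fun s => η δ s * f s) t - f' t)^2)
      (nhdsWithin 0 (Set.Ioo 0 (L/4))) (nhds 0) := by
  -- basic facts about f
  have hf0 : f 0 = 0 := hvanish 0 (by simp)
  have hfL : f L = 0 := hvanish L (by simp)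
  have hfeq : ∀ t, f t = ∫ s in (0:ℝ)..t, f' s := by
    intro t; have := hFTC 0 t; rw [hf0] at this; linarith
  -- local integrability of f'
  have hf'loc : LocallyIntegrable f' volume := by
    rw [locallyIntegrable_iff]
    intro k hk
    obtain ⟨R, hR⟩ := hk.isBounded.subset_closedBall 0
    rw [Real.closedBall_eq_Icc, zero_sub, zero_add] at hR
    exact ((integrableOn_Icc_iff_integrableOn_Ioc).2 (hf'int (-R) R).1).mono_set hR
  have hIccInt : ∀ a b : ℝ, IntegrableOn f' (Icc a b) volume :=
    fun a b => (integrableOn_Icc_iff_integrableOn_Ioc).2 (hf'int a b).1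
  have hIccIntAbs : ∀ a b : ℝ, IntegrableOn (fun t => |f' t|) (Icc a b) volume :=
    fun a b => (hIccInt a b).abs
  -- a.e. differentiability of f
  have hfd : ∀ᵐ x, HasDerivAt f (f' x) x := by
    filter_upwards [ae_hasDerivAt_primitive hf'loc hf'int] with x hx
    rw [show f = fun y => ∫ s in (0:ℝ)..y, f' s from funext hfeq]
    exact hx
  -- a.e. vanishing of f' outside [0, L]
  have hf'0 : ∀ᵐ x, x ∉ Icc 0 L → f' x = 0 := by
    filter_upwards [hfd] with x hx hxout
    have hopen : IsOpen (Icc (0:ℝ) L)ᶜ := isClosed_Icc.isOpen_compl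
    have hev : f =ᶠ[nhds x] (fun _ => 0) := by
      filter_upwards [hopen.mem_nhds hxout] with y hy
      exact hvanish y (fun h => hy (Ioo_subset_Icc_self h))
    have h1 : deriv f x = f' x := hx.deriv
    have h2 : deriv f x = 0 := by rw [hev.deriv_eq, deriv_const]
    rw [← h1, h2]
  -- integrability facts
  have hfc : HasCompactSupport f :=
    HasCompactSupport.intro isCompact_Icc
      (fun x hx => hvanish x (fun h => hx (Ioo_subset_Icc_self h)))
  have hfsqcont : Continuous fun t => (f t)^2 := hcont.pow 2
  have hfsqint : Integrable (fun t => (f t)^2) volume := by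
    have : HasCompactSupport fun t => (f t)^2 := by
      simpa [sq, Pi.mul_def] using hfc.mul_left (f := f)
    exact hfsqcont.integrable_of_hasCompactSupport this
  have hf'sqint : Integrable (fun t => (f' t)^2) volume := by
    have h2 := hf'L2.integrable_norm_rpow (by norm_num) (by norm_num)
    refine h2.congr (Eventually.of_forall fun x => ?_)
    have : ((2:ℝ≥0∞).toReal) = ((2:ℕ):ℝ) := by norm_num
    simp only [this, Real.rpow_natCast, Real.norm_eq_abs, sq_abs]
  -- the strip error functional
  set G : ℝ → ℝ := fun δ =>
    (∫ t in Icc 0 δ, (f' t)^2) + ∫ t in Icc (L - δ) L, (f' t)^2 with hG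
  have hGnn : ∀ δ, 0 ≤ G δ := by
    intro δ
    have h1 : (0:ℝ) ≤ ∫ t in Icc 0 δ, (f' t)^2 := integral_nonneg fun t => sq_nonneg _
    have h2 : (0:ℝ) ≤ ∫ t in Icc (L-δ) L, (f' t)^2 := integral_nonneg fun t => sq_nonneg _
    positivity
  -- G tends to 0
  have hGtendsto : Tendsto G (nhdsWithin 0 (Set.Ioo 0 (L/4))) (nhds 0) := by
    have hii : ∀ a b : ℝ, IntervalIntegrable (fun t => (f' t)^2) volume a b :=
      fun a b => hf'sqint.intervalIntegrable
    have hc1 : Continuous fun δ : ℝ => ∫ t in (0:ℝ)..δ, (f' t)^2 :=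
      intervalIntegral.continuous_primitive hii 0
    have hc2 : Continuous fun δ : ℝ => ∫ t in (L - δ)..L, (f' t)^2 := by
      set F : ℝ → ℝ := fun y => ∫ t in (L:ℝ)..y, (f' t)^2 with hFdef
      have h : Continuous F := intervalIntegral.continuous_primitive hii L
      have h3 : Continuous fun δ : ℝ => -F (L - δ) :=
        (h.comp (continuous_const.sub continuous_id)).neg
      refine h3.congr fun δ => ?_
      rw [hFdef]
      rw [← intervalIntegral.integral_symm]
    have hcont2 : Continuous fun δ : ℝ =>
        (∫ t in (0:ℝ)..δ, (f' t)^2) + ∫ t in (L - δ)..L, (f' t)^2 := hc1.add hc2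
    have h0 : ((∫ t in (0:ℝ)..(0:ℝ), (f' t)^2) + ∫ t in (L - 0)..L, (f' t)^2) = 0 := by
      simp
    have := hcont2.tendsto 0
    rw [h0] at this
    refine Tendsto.congr' ?_ (this.mono_left nhdsWithin_le_nhds)
    filter_upwards [self_mem_nhdsWithin] with δ hδ
    have hδ0 : (0:ℝ) < δ := hδ.1
    have hδL : δ < L/4 := hδ.2
    rw [hG]
    have e1 : ∫ t in (0:ℝ)..δ, (f' t)^2 = ∫ t in Icc 0 δ, (f' t)^2 := by
      rw [intervalIntegral.integral_of_le hδ0.le, integral_Icc_eq_integral_Ioc]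
    have e2 : ∫ t in (L - δ)..L, (f' t)^2 = ∫ t in Icc (L - δ) L, (f' t)^2 := by
      rw [intervalIntegral.integral_of_le (by linarith), integral_Icc_eq_integral_Ioc]
    rw [e1, e2]
  -- the main bound
  set K : ℝ := L^2 + 2 * Cc^2 + 2 with hK
  have hbound : ∀ δ ∈ Set.Ioo 0 (L/4),
      ((∫ t, (η δ t * f t - f t)^2) +
        ∫ t, (deriv (fun s => η δ s * f s) t - f' t)^2) ≤ K * G δ := by
    intro δ hδ
    obtain ⟨hδ0, hδL4⟩ := hδ
    have hδL : δ < L := by linarith [hL]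
    have hδLδ : δ < L - δ := by linarith
    set S : Set ℝ := Icc 0 δ ∪ Icc (L - δ) L with hS
    have hSmeas : MeasurableSet S := measurableSet_Icc.union measurableSet_Icc
    -- Poincaré bounds on the two strips
    have hb1 : ∀ t ∈ Icc (0:ℝ) δ, |f t| ≤ ∫ s in Icc (0:ℝ) δ, |f' s| := by
      intro t ht
      rw [hfeq t]
      calc |∫ s in (0:ℝ)..t, f' s| ≤ ∫ s in (0:ℝ)..t, |f' s| :=
            intervalIntegral.abs_integral_le_integral_abs ht.1
        _ = ∫ s in Ioc 0 t, |f' s| := intervalIntegral.integral_of_le ht.1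
        _ ≤ ∫ s in Icc (0:ℝ) δ, |f' s| := by
            apply setIntegral_mono_set (hIccIntAbs 0 δ)
              (Eventually.of_forall fun s => abs_nonneg _)
            exact HasSubset.Subset.eventuallyLE (fun s hs => ⟨hs.1.le, hs.2.trans ht.2⟩)
      
    have hb2 : ∀ t ∈ Icc (L - δ) L, |f t| ≤ ∫ s in Icc (L - δ) L, |f' s| := by
      intro t ht
      have hft : f t = -∫ s in t..L, f' s := by
        have := hFTC t L; rw [hfL] at this; linarith
      rw [hft, abs_neg]
      calc |∫ s in t..L, f' s| ≤ ∫ s in t..L, |f' s| :=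
            intervalIntegral.abs_integral_le_integral_abs ht.2
        _ = ∫ s in Ioc t L, |f' s| := intervalIntegral.integral_of_le ht.2
        _ ≤ ∫ s in Icc (L - δ) L, |f' s| := by
            apply setIntegral_mono_set (hIccIntAbs (L-δ) L)
              (Eventually.of_forall fun s => abs_nonneg _)
            exact HasSubset.Subset.eventuallyLE (fun s hs => ⟨ht.1.trans hs.1.le, hs.2⟩)
    have hp1 : ∫ t in Icc 0 δ, (f t)^2 ≤ δ^2 * ∫ t in Icc 0 δ, (f' t)^2 := by
      have := poincare_strip (g := f) (g' := f') hδ0.le hb1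
        hfsqint.integrableOn hf'L2
      simpa using this
    have hp2 : ∫ t in Icc (L-δ) L, (f t)^2 ≤ δ^2 * ∫ t in Icc (L-δ) L, (f' t)^2 := by
      have := poincare_strip (g := f) (g' := f') (a := L - δ) (b := L) (by linarith) hb2
        hfsqint.integrableOn hf'L2
      rwa [show L - (L - δ) = δ by ring] at this
    -- set integral over S
    have hdisj : Disjoint (Icc (0:ℝ) δ) (Icc (L - δ) L) := by
      apply Set.disjoint_left.2
      rintro x ⟨_, h2⟩ ⟨h3, _⟩
      linarith
    have hSf : ∫ t in S, (f t)^2 = (∫ t in Icc 0 δ, (f t)^2) + ∫ t in Icc (L-δ) L, (f t)^2 :=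
      setIntegral_union hdisj measurableSet_Icc hfsqint.integrableOn hfsqint.integrableOn
    have hSf' : ∫ t in S, (f' t)^2 = (∫ t in Icc 0 δ, (f' t)^2) + ∫ t in Icc (L-δ) L, (f' t)^2 :=
      setIntegral_union hdisj measurableSet_Icc hf'sqint.integrableOn hf'sqint.integrableOn
    have hSfG : ∫ t in S, (f t)^2 ≤ δ^2 * G δ := by
      rw [hSf, hG]
      calc _ ≤ δ^2 * (∫ t in Icc 0 δ, (f' t)^2) + δ^2 * ∫ t in Icc (L-δ) L, (f' t)^2 :=
            add_le_add hp1 hp2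
        _ = _ := by ring
    have hSf'G : ∫ t in S, (f' t)^2 = G δ := hSf'
    -- case analysis helper for points outside S
    have houtS : ∀ t, t ∉ S → (t < 0 ∨ L < t) ∨ t ∈ Ioo δ (L - δ) := by
      intro t ht
      rw [hS, Set.mem_union, not_or, Set.mem_Icc, Set.mem_Icc, not_and_or, not_and_or] at ht
      push_neg at ht
      obtain ⟨h1, h2⟩ := ht
      rcases h1 with h1 | h1
      · exact Or.inl (Or.inl h1)
      · rcases h2 with h2 | h2
        · exact Or.inr ⟨h1, h2⟩
        · exact Or.inl (Or.inr h2)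
    -- bound for the first integral
    have hA : (∫ t, (η δ t * f t - f t)^2) ≤ ∫ t in S, (f t)^2 := by
      rw [← integral_indicator hSmeas]
      apply integral_mono_of_nonneg (Eventually.of_forall fun t => sq_nonneg _)
        (hfsqint.indicator hSmeas)
      refine Eventually.of_forall fun t => ?_
      dsimp only
      by_cases htS : t ∈ S
      · rw [Set.indicator_of_mem htS]
        have h01 := hη01 δ ⟨hδ0, hδL4⟩ t
        have : (η δ t * f t - f t)^2 = (η δ t - 1)^2 * (f t)^2 := by ring
        rw [this]
        have h1 : (η δ t - 1)^2 ≤ 1 := by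
          rw [Set.mem_Icc] at h01; nlinarith
        nlinarith [sq_nonneg (f t)]
      · rw [Set.indicator_of_notMem htS]
        rcases houtS t htS with h | h
        · have hfz : f t = 0 := by
            apply hvanish
            rcases h with h | h
            · rw [Set.mem_Ioo]; push_neg; intro h'; linarith
            · rw [Set.mem_Ioo]; push_neg; intro h'; linarith
          rw [hfz]; simp
        · rw [hη1 δ ⟨hδ0, hδL4⟩ t ⟨h.1.le, h.2.le⟩]; simp
    -- derivative identity a.e.
    have hlip := hηlip δ ⟨hδ0, hδL4⟩
    have hderiv_ae : ∀ᵐ t, deriv (fun s => η δ s * f s) t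
        = deriv (η δ) t * f t + η δ t * f' t := by
      filter_upwards [hfd, hlip.ae_differentiableAt] with x hfx hηx
      exact (hηx.hasDerivAt.mul hfx).deriv
    -- pointwise bound for deriv η
    have hderivη : ∀ t, |deriv (η δ) t| ≤ Cc / δ := by
      intro t
      have := norm_deriv_le_of_lipschitz (𝕜 := ℝ) (f := η δ) (x₀ := t) hlip
      rwa [Real.norm_eq_abs, Real.coe_toNNReal _ (by positivity)] at this
    -- deriv η vanishes on Ioo δ (L - δ)
    have hderivη0 : ∀ t ∈ Ioo δ (L - δ), deriv (η δ) t = 0 := by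
      intro t ht
      have hev : η δ =ᶠ[nhds t] (fun _ => 1) := by
        filter_upwards [isOpen_Ioo.mem_nhds ht] with y hy
        exact hη1 δ ⟨hδ0, hδL4⟩ y ⟨hy.1.le, hy.2.le⟩
      rw [hev.deriv_eq, deriv_const]
    -- bound for the second integral
    have hB : (∫ t, (deriv (fun s => η δ s * f s) t - f' t)^2)
        ≤ 2 * (Cc/δ)^2 * (∫ t in S, (f t)^2) + 2 * ∫ t in S, (f' t)^2 := by
      have hrhs_int : Integrable (fun t =>
          2 * (Cc/δ)^2 * (S.indicator (fun s => (f s)^2) t)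
          + 2 * (S.indicator (fun s => (f' s)^2) t)) volume :=
        ((hfsqint.indicator hSmeas).const_mul _).add ((hf'sqint.indicator hSmeas).const_mul 2)
      have step : (∫ t, (deriv (fun s => η δ s * f s) t - f' t)^2)
          ≤ ∫ t, (2 * (Cc/δ)^2 * (S.indicator (fun s => (f s)^2) t)
              + 2 * (S.indicator (fun s => (f' s)^2) t)) := by
        apply integral_mono_of_nonneg (Eventually.of_forall fun t => sq_nonneg _) hrhs_int
        filter_upwards [hderiv_ae, hf'0] with t hdt hf't
        rw [hdt]
        by_cases htS : t ∈ S
        · rw [Set.indicator_of_mem htS, Set.indicator_of_mem htS]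
          have h1 : (deriv (η δ) t * f t)^2 ≤ (Cc/δ)^2 * (f t)^2 := by
            have := hderivη t
            have h2 : (deriv (η δ) t)^2 ≤ (Cc/δ)^2 := by
              nlinarith [abs_nonneg (deriv (η δ) t), sq_abs (deriv (η δ) t)]
            nlinarith [sq_nonneg (f t), sq_nonneg (deriv (η δ) t)]
          have h01 := hη01 δ ⟨hδ0, hδL4⟩ t
          rw [Set.mem_Icc] at h01
          have h2 : ((η δ t - 1) * f' t)^2 ≤ (f' t)^2 := by
            have : (η δ t - 1)^2 ≤ 1 := by nlinarith
            nlinarith [sq_nonneg (f' t)]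
          have expand : (deriv (η δ) t * f t + η δ t * f' t - f' t)
              = deriv (η δ) t * f t + (η δ t - 1) * f' t := by ring
          rw [expand]
          nlinarith [sq_nonneg (deriv (η δ) t * f t - (η δ t - 1) * f' t)]
        · rw [Set.indicator_of_notMem htS, Set.indicator_of_notMem htS]
          rcases houtS t htS with h | h
          · have hf'z : f' t = 0 := by
              apply hf't
              rcases h with h | h
              · rw [Set.mem_Icc]; push_neg; intro h'; linarith
              · rw [Set.mem_Icc]; push_neg; intro h'; linarith
            have hfz : f t = 0 := by
              apply hvanish
              rcases h with h | h
              · rw [Set.mem_Ioo]; push_neg; intro h'; linarith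
              · rw [Set.mem_Ioo]; push_neg; intro h'; linarith
            rw [hf'z, hfz]
            simp
          · rw [hderivη0 t h, hη1 δ ⟨hδ0, hδL4⟩ t ⟨h.1.le, h.2.le⟩]
            simp
      calc (∫ t, (deriv (fun s => η δ s * f s) t - f' t)^2) ≤ _ := step
        _ = 2 * (Cc/δ)^2 * (∫ t, S.indicator (fun s => (f s)^2) t)
            + 2 * ∫ t, S.indicator (fun s => (f' s)^2) t := by
            rw [integral_add ((hfsqint.indicator hSmeas).const_mul _)
              ((hf'sqint.indicator hSmeas).const_mul 2),
              integral_const_mul, integral_const_mul]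
        _ = 2 * (Cc/δ)^2 * (∫ t in S, (f t)^2) + 2 * ∫ t in S, (f' t)^2 := by
            rw [integral_indicator hSmeas, integral_indicator hSmeas]
    -- combine
    have hCcδ : 2 * (Cc/δ)^2 * (δ^2 * G δ) = 2 * Cc^2 * G δ := by
      field_simp
    have hGnnδ := hGnn δ
    have hSfnn : (0:ℝ) ≤ ∫ t in S, (f t)^2 := integral_nonneg fun t => sq_nonneg _
    calc (∫ t, (η δ t * f t - f t)^2) + ∫ t, (deriv (fun s => η δ s * f s) t - f' t)^2
        ≤ (∫ t in S, (f t)^2) + (2 * (Cc/δ)^2 * (∫ t in S, (f t)^2) + 2 * ∫ t in S, (f' t)^2) :=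
          add_le_add hA hB
      _ ≤ (δ^2 * G δ) + (2 * (Cc/δ)^2 * (δ^2 * G δ) + 2 * G δ) := by
          apply add_le_add hSfG
          apply add_le_add _ (by rw [hSf'G])
          apply mul_le_mul_of_nonneg_left hSfG (by positivity)
      _ = (δ^2 + 2*Cc^2 + 2) * G δ := by rw [hCcδ]; ring
      _ ≤ K * G δ := by
          apply mul_le_mul_of_nonneg_right _ hGnnδ
          rw [hK]
          nlinarith [sq_nonneg δ, sq_nonneg L]
  -- nonnegativity
  have hnn : ∀ δ : ℝ, 0 ≤ (∫ t, (η δ t * f t - f t)^2) +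
      ∫ t, (deriv (fun s => η δ s * f s) t - f' t)^2 := by
    intro δ
    have h1 : (0:ℝ) ≤ ∫ t, (η δ t * f t - f t)^2 := integral_nonneg fun t => sq_nonneg _
    have h2 : (0:ℝ) ≤ ∫ t, (deriv (fun s => η δ s * f s) t - f' t)^2 :=
      integral_nonneg fun t => sq_nonneg _
    positivity
  -- squeeze
  have hKG : Tendsto (fun δ => K * G δ) (nhdsWithin 0 (Set.Ioo 0 (L/4))) (nhds 0) := by
    have := hGtendsto.const_mul K
    rwa [mul_zero] at this
  apply squeeze_zero' (Eventually.of_forall hnn) _ hKG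
  filter_upwards [self_mem_nhdsWithin] with δ hδ
  exact hbound δ hδ
end

section
/- Fix μ > 0, L > 0 with e^{2μL} > 2, integers t₁ < t₂ < t₃, and β ∈ (0, μ) with e^{2(μ-β)L} > 2. For real numbers a⁺, a⁻ define f(t) := a⁺ e^{μ t} + a⁻ e^{-μ t} and the norm N_j := ∫_{t_j L}^{(t_j+1)L} f(t)² dt. Then N_{t₂} ≤ e^{-2βL}·(N_{t₁} + N_{t₃}). -/
set_option maxHeartbeats 1000000

lemma int_exp (c a b : ℝ) (hc : c ≠ 0) :
    ∫ t in a..b, Real.exp (c*t) = (Real.exp (c*b) - Real.exp (c*a))/c := by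
  have h : ∀ t ∈ Set.uIcc a b, HasDerivAt (fun u => Real.exp (c*u)/c) (Real.exp (c*t)) t := by
    intro t _
    have h1 : HasDerivAt (fun u : ℝ => c*u) c t := by simpa using (hasDerivAt_id t).const_mul c
    have h3 := h1.exp.div_const c
    convert h3 using 1
    · rfl
    · rfl
    · exact (mul_div_cancel_right₀ _ hc).symm
  rw [intervalIntegral.integral_eq_sub_of_hasDerivAt h
    ((Real.continuous_exp.comp (continuous_const.mul continuous_id)).intervalIntegrable a b)]
  ring

lemma Nval (μ L p m s : ℝ) (hμ : 0 < μ) :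
    (∫ t in (s*L)..((s+1)*L), (p * Real.exp (μ*t) + m * Real.exp (-μ*t))^2)
      = (p^2 * (Real.exp (μ*L*s))^2 * ((Real.exp (μ*L))^2 - 1)
         + m^2 * (Real.exp (-(μ*L*s)))^2 * (1 - (Real.exp (-(μ*L)))^2)) / (2*μ)
        + 2*p*m*L := by
  have h2 : (2:ℝ)*μ ≠ 0 := by positivity
  have hn2 : -((2:ℝ)*μ) ≠ 0 := by simpa using h2
  have hfg : Set.EqOn (fun t => (p * Real.exp (μ*t) + m * Real.exp (-μ*t))^2)
      (fun t => p^2 * Real.exp ((2*μ)*t) + m^2 * Real.exp ((-(2*μ))*t) + 2*p*m)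
      (Set.uIcc (s*L) ((s+1)*L)) := by
    intro t _
    simp only
    have h1 : Real.exp (μ*t) * Real.exp (-μ*t) = 1 := by
      rw [← Real.exp_add]; norm_num
    have h2' : Real.exp ((2*μ)*t) = Real.exp (μ*t) * Real.exp (μ*t) := by
      rw [← Real.exp_add]; ring_nf
    have h3 : Real.exp ((-(2*μ))*t) = Real.exp (-μ*t) * Real.exp (-μ*t) := by
      rw [← Real.exp_add]; ring_nf
    linear_combination 2*p*m*h1 - p^2*h2' - m^2*h3
  rw [intervalIntegral.integral_congr hfg]
  have i1 : IntervalIntegrable (fun t => p^2 * Real.exp ((2*μ)*t)) MeasureTheory.volume (s*L) ((s+1)*L) :=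
    (continuous_const.mul (Real.continuous_exp.comp (continuous_const.mul continuous_id))).intervalIntegrable _ _
  have i2 : IntervalIntegrable (fun t => m^2 * Real.exp ((-(2*μ))*t)) MeasureTheory.volume (s*L) ((s+1)*L) :=
    (continuous_const.mul (Real.continuous_exp.comp (continuous_const.mul continuous_id))).intervalIntegrable _ _
  have i3 : IntervalIntegrable (fun _ : ℝ => 2*p*m) MeasureTheory.volume (s*L) ((s+1)*L) :=
    continuous_const.intervalIntegrable _ _
  rw [intervalIntegral.integral_add (i1.add i2) i3, intervalIntegral.integral_add i1 i2,
    intervalIntegral.integral_const_mul, intervalIntegral.integral_const_mul,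
    intervalIntegral.integral_const, int_exp _ _ _ h2, int_exp _ _ _ hn2]
  have e1 : Real.exp (2*μ*((s+1)*L)) = (Real.exp (μ*L*s))^2 * (Real.exp (μ*L))^2 := by
    rw [pow_two, pow_two, ← Real.exp_add, ← Real.exp_add, ← Real.exp_add]; ring_nf
  have e2 : Real.exp (2*μ*(s*L)) = (Real.exp (μ*L*s))^2 := by
    rw [pow_two, ← Real.exp_add]; ring_nf
  have e3 : Real.exp (-(2*μ)*((s+1)*L)) = (Real.exp (-(μ*L*s)))^2 * (Real.exp (-(μ*L)))^2 := by
    rw [pow_two, pow_two, ← Real.exp_add, ← Real.exp_add, ← Real.exp_add]; ring_nf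
  have e4 : Real.exp (-(2*μ)*(s*L)) = (Real.exp (-(μ*L*s)))^2 := by
    rw [pow_two, ← Real.exp_add]; ring_nf
  rw [e1, e2, e3, e4]
  field_simp
  ring


lemma key_ineq (q w v y1 y2 y3 z1 z2 z3 p m c : ℝ)
    (hq0 : 0 < q) (hq1 : q < 1) (hw1 : 1 < w) (hv0 : 0 < v) (hwv : w*v = 1)
    (hy1p : 0 < y1) (hy2p : 0 < y2) (hz2p : 0 < z2) (hz3p : 0 < z3)
    (hyz2 : y2*z2 = 1) (hqw : 2 < q*w^2) (hy32 : w*y2 ≤ y3) (hz12 : w*z2 ≤ z1)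
    (hc : 0 < c) (hsinh : 2*c ≤ w - v) :
    (p^2*y2^2*(w^2-1) + m^2*z2^2*(1-v^2)) + 4*c*(p*m)
      ≤ q*((p^2*y1^2*(w^2-1) + m^2*z1^2*(1-v^2))
          + (p^2*y3^2*(w^2-1) + m^2*z3^2*(1-v^2)) + 8*c*(p*m)) := by
  have hv1 : v < 1 := by nlinarith
  have hS : (0:ℝ) < w^2 - 1 := by nlinarith
  have hV : (0:ℝ) < 1 - v^2 := by nlinarith
  have hvv : (1:ℝ) - v^2 = (w^2-1)*v^2 := by linear_combination (-(w*v)-1)*hwv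
  have hSv : 2*c ≤ (w^2-1)*v := by
    have h : (w^2-1)*v = w - v := by linear_combination w*hwv
    linarith
  have k1 : 2*(p^2*y2^2*(w^2-1)) ≤ q*(p^2*y3^2*(w^2-1)) := by
    have hyy : (w*y2)*(w*y2) ≤ y3*y3 :=
      mul_le_mul hy32 hy32 (by nlinarith) (by nlinarith)
    have a1 : 2*y2^2 ≤ q*y3^2 := by nlinarith [hyy, hqw, sq_nonneg y2, hq0]
    have a2 : (0:ℝ) ≤ p^2*(w^2-1) := by positivity
    have := mul_le_mul_of_nonneg_left a1 a2
    nlinarith [this]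
  have k2 : 2*(m^2*z2^2*(1-v^2)) ≤ q*(m^2*z1^2*(1-v^2)) := by
    have hzz : (w*z2)*(w*z2) ≤ z1*z1 :=
      mul_le_mul hz12 hz12 (by nlinarith) (by nlinarith)
    have a1 : 2*z2^2 ≤ q*z1^2 := by nlinarith [hzz, hqw, sq_nonneg z2, hq0]
    have a2 : (0:ℝ) ≤ m^2*(1-v^2) := by positivity
    have := mul_le_mul_of_nonneg_left a1 a2
    nlinarith [this]
  have k3 : (0:ℝ) ≤ q*(p^2*y1^2*(w^2-1)) := by positivity
  have k4 : (0:ℝ) ≤ q*(m^2*z3^2*(1-v^2)) := by positivity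
  have hvv2 : m^2*z2^2*(1-v^2) = m^2*z2^2*((w^2-1)*v^2) := by rw [hvv]
  have k5 : (0:ℝ) ≤ p^2*y2^2*(w^2-1) + m^2*z2^2*(1-v^2) + (2*q-1)*(4*c*(p*m)) := by
    rcases le_or_gt 0 (p*m) with h | h
    · have expand : p^2*y2^2*(w^2-1) + m^2*z2^2*((w^2-1)*v^2) - 2*((w^2-1)*v)*(p*m)
          = (w^2-1)*(p*y2 - m*v*z2)^2 := by
        linear_combination (2*(w^2-1)*v*p*m)*hyz2
      have hsq : (0:ℝ) ≤ (w^2-1)*(p*y2 - m*v*z2)^2 := by positivity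
      have hsq' : 2*((w^2-1)*v)*(p*m)
          ≤ p^2*y2^2*(w^2-1) + m^2*z2^2*((w^2-1)*v^2) := by linarith [expand, hsq]
      have hb : (p*m)*(2*c) ≤ (p*m)*((w^2-1)*v) := mul_le_mul_of_nonneg_left hSv h
      have hqc : (0:ℝ) ≤ q*(8*c*(p*m)) :=
        mul_nonneg hq0.le (mul_nonneg (by linarith) h)
      linarith [hsq', hb, hqc, hvv2]
    · have expand : p^2*y2^2*(w^2-1) + m^2*z2^2*((w^2-1)*v^2) + 2*((w^2-1)*v)*(p*m)
          = (w^2-1)*(p*y2 + m*v*z2)^2 := by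
        linear_combination (-2*(w^2-1)*v*p*m)*hyz2
      have hsq : (0:ℝ) ≤ (w^2-1)*(p*y2 + m*v*z2)^2 := by positivity
      have hsq' : -(2*((w^2-1)*v)*(p*m))
          ≤ p^2*y2^2*(w^2-1) + m^2*z2^2*((w^2-1)*v^2) := by linarith [expand, hsq]
      have hb : (-(p*m))*(2*c) ≤ (-(p*m))*((w^2-1)*v) :=
        mul_le_mul_of_nonneg_left hSv (by linarith)
      have hqc : (0:ℝ) ≤ (1-q)*(8*c*(-(p*m))) :=
        mul_nonneg (by linarith) (mul_nonneg (by linarith) (by linarith))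
      linarith [hsq', hb, hqc, hvv2]
  linarith [k1, k2, k3, k4, k5]




/-- Single-mode three circles inequality on a cylinder: for
`f(t) = a⁺ e^{μt} + a⁻ e^{-μt}` and `N_j = ∫_{t_jL}^{(t_j+1)L} f²`, with
`e^{2μL} > 2`, `0 < β < μ`, `e^{2(μ-β)L} > 2`, and integers `t₁ < t₂ < t₃`, one has
`N_{t₂} ≤ e^{-2βL} (N_{t₁} + N_{t₃})`. -/
theorem stmt_13 (μ L β : ℝ) (hμ : 0 < μ) (hL : 0 < L)
    (h1 : 2 < Real.exp (2*μ*L)) (hβ0 : 0 < β) (hβμ : β < μ)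
    (h2 : 2 < Real.exp (2*(μ - β)*L))
    (t₁ t₂ t₃ : ℕ) (h12 : t₁ < t₂) (h23 : t₂ < t₃) (ap am : ℝ) :
    (∫ t in ((t₂:ℝ)*L)..(((t₂:ℝ)+1)*L),
        (ap * Real.exp (μ*t) + am * Real.exp (-μ*t))^2)
      ≤ Real.exp (-2*β*L) *
      ((∫ t in ((t₁:ℝ)*L)..(((t₁:ℝ)+1)*L),
          (ap * Real.exp (μ*t) + am * Real.exp (-μ*t))^2) +
       (∫ t in ((t₃:ℝ)*L)..(((t₃:ℝ)+1)*L),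
          (ap * Real.exp (μ*t) + am * Real.exp (-μ*t))^2)) := by
  rw [Nval μ L ap am ((t₁:ℝ)) hμ, Nval μ L ap am ((t₂:ℝ)) hμ, Nval μ L ap am ((t₃:ℝ)) hμ]
  set w := Real.exp (μ*L) with hw_def
  set v := Real.exp (-(μ*L)) with hv_def
  set q := Real.exp (-2*β*L) with hq_def
  set y1 := Real.exp (μ*L*(t₁:ℝ)) with hy1_def
  set y2 := Real.exp (μ*L*(t₂:ℝ)) with hy2_def
  set y3 := Real.exp (μ*L*(t₃:ℝ)) with hy3_def
  set z1 := Real.exp (-(μ*L*(t₁:ℝ))) with hz1_def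
  set z2 := Real.exp (-(μ*L*(t₂:ℝ))) with hz2_def
  set z3 := Real.exp (-(μ*L*(t₃:ℝ))) with hz3_def
  have hμL : 0 < μ*L := mul_pos hμ hL
  have hw1 : 1 < w := by rw [hw_def]; exact Real.one_lt_exp_iff.mpr hμL
  have hv0 : 0 < v := Real.exp_pos _
  have hwv : w * v = 1 := by rw [hw_def, hv_def, ← Real.exp_add]; simp
  have hq0 : 0 < q := Real.exp_pos _
  have hq1 : q < 1 := by
    rw [hq_def]
    have h' : -2*β*L < 0 := by nlinarith
    simpa using Real.exp_lt_one_iff.mpr h'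
  have hy1p : 0 < y1 := Real.exp_pos _
  have hy2p : 0 < y2 := Real.exp_pos _
  have hz2p : 0 < z2 := Real.exp_pos _
  have hz3p : 0 < z3 := Real.exp_pos _
  have hyz2 : y2 * z2 = 1 := by rw [hy2_def, hz2_def, ← Real.exp_add]; simp
  have hqw : 2 < q * w^2 := by
    have h' : q * w^2 = Real.exp (2*(μ-β)*L) := by
      rw [hq_def, hw_def, pow_two, ← Real.exp_add, ← Real.exp_add]; ring_nf
    rw [h']; exact h2
  have hy32 : w * y2 ≤ y3 := by
    rw [hw_def, hy2_def, hy3_def, ← Real.exp_add]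
    apply Real.exp_le_exp.mpr
    have h' : (t₂:ℝ) + 1 ≤ (t₃:ℝ) := by exact_mod_cast h23
    nlinarith
  have hz12 : w * z2 ≤ z1 := by
    rw [hw_def, hz1_def, hz2_def, ← Real.exp_add]
    apply Real.exp_le_exp.mpr
    have h' : (t₁:ℝ) + 1 ≤ (t₂:ℝ) := by exact_mod_cast h12
    nlinarith
  have hsinh : 2*(μ*L) ≤ w - v := by
    have hs := Real.self_le_sinh_iff.mpr hμL.le
    rw [Real.sinh_eq] at hs
    rw [hw_def, hv_def]
    linarith
  have key := key_ineq q w v y1 y2 y3 z1 z2 z3 ap am (μ*L)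
    hq0 hq1 hw1 hv0 hwv hy1p hy2p hz2p hz3p hyz2 hqw hy32 hz12 hμL hsinh
  have h2μ : (0:ℝ) < 2*μ := by linarith
  have hnn : 0 ≤ (q*((ap^2*y1^2*(w^2-1) + am^2*z1^2*(1-v^2))
        + (ap^2*y3^2*(w^2-1) + am^2*z3^2*(1-v^2)) + 8*(μ*L)*(ap*am))
      - ((ap^2*y2^2*(w^2-1) + am^2*z2^2*(1-v^2)) + 4*(μ*L)*(ap*am))) / (2*μ) :=
    div_nonneg (by linarith [key]) h2μ.le
  rw [← sub_nonneg]
  have heq : q * ((ap^2*y1^2*(w^2-1) + am^2*z1^2*(1-v^2))/(2*μ) + 2*ap*am*L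
        + ((ap^2*y3^2*(w^2-1) + am^2*z3^2*(1-v^2))/(2*μ) + 2*ap*am*L))
      - ((ap^2*y2^2*(w^2-1) + am^2*z2^2*(1-v^2))/(2*μ) + 2*ap*am*L)
      = (q*((ap^2*y1^2*(w^2-1) + am^2*z1^2*(1-v^2))
        + (ap^2*y3^2*(w^2-1) + am^2*z3^2*(1-v^2)) + 8*(μ*L)*(ap*am))
      - ((ap^2*y2^2*(w^2-1) + am^2*z2^2*(1-v^2)) + 4*(μ*L)*(ap*am))) / (2*μ) := by
    field_simp
    ring
  linarith [heq, hnn]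
end
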